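/- (Almansi decomposition on the plane.) Let u : ℝ² → ℝ be an entire biharmonic function. Then there exist harmonic functions h₀, h₁ : ℝ² → ℝ (C^∞ functions with Δh₀ = 0 and Δh₁ = 0 everywhere) such that u(x,y) = h₀(x,y) + (x² + y²)·h₁(x,y) for all (x,y) ∈ ℝ². -/

import Mathlib

set_option synthInstance.maxHeartbeats 1000000
set_option maxHeartbeats 1000000

noncomputable section
open Metric Set Bornology

/-- The Euclidean plane. -/
abbrev Plane := EuclideanSpace ℝ (Fin 2)

/-- The Euclidean Laplacian `Δf = ∂²f/∂x² + ∂²f/∂y²` of `f : ℝ² → ℝ`. -/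
def lap (f : Plane → ℝ) (x : Plane) : ℝ :=
  ∑ i : Fin 2,
    fderiv ℝ (fun y => fderiv ℝ f y (EuclideanSpace.single i 1)) x (EuclideanSpace.single i 1)

namespace Almansi


lemma one_le_inf : ((⊤:ℕ∞) : WithTop ℕ∞) ≠ 0 := by simp
lemma inf_add_one : ((⊤:ℕ∞) : WithTop ℕ∞) + 1 ≤ ((⊤:ℕ∞) : WithTop ℕ∞) := by norm_cast

/-- coordinate projections -/
def P (i : Fin 2) : Plane →L[ℝ] ℝ := EuclideanSpace.proj i

@[simp] lemma P_apply (i : Fin 2) (v : Plane) : P i v = v i := rfl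

/-- standard basis vectors -/
def E1 (i : Fin 2) : Plane := EuclideanSpace.single i 1

variable {G : Type*} [NormedAddCommGroup G] [NormedSpace ℝ G]

/-! ### Parametric integrals -/

/-- partial derivative of `F` in the second variable. -/
def pd (F : ℝ × Plane → G) (t : ℝ) (x : Plane) : Plane →L[ℝ] G :=
  (fderiv ℝ F (t, x)).comp (ContinuousLinearMap.inr ℝ ℝ Plane)

lemma hasFDerivAt_pd {F : ℝ × Plane → G} (hF : ContDiff ℝ (⊤:ℕ∞) F) (t : ℝ) (x : Plane) :
    HasFDerivAt (fun y => F (t, y)) (pd F t x) x := by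
  have h1 : HasFDerivAt (fun y : Plane => ((t, y) : ℝ × Plane))
      (ContinuousLinearMap.inr ℝ ℝ Plane) x :=
    HasFDerivAt.prodMk (hasFDerivAt_const t x) (hasFDerivAt_id x)
  exact ((hF.differentiable one_le_inf (t, x)).hasFDerivAt).comp x h1

lemma contDiff_pd {F : ℝ × Plane → G} (hF : ContDiff ℝ (⊤:ℕ∞) F) :
    ContDiff ℝ (⊤:ℕ∞) (fun p : ℝ × Plane => pd F p.1 p.2) := by
  have h1 : ContDiff ℝ (⊤:ℕ∞) (fderiv ℝ F) := hF.fderiv_right inf_add_one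
  exact ((ContinuousLinearMap.compL ℝ Plane (ℝ × Plane) G).flip
      (ContinuousLinearMap.inr ℝ ℝ Plane)).contDiff.comp h1

lemma continuous_pd {F : ℝ × Plane → G} (hF : ContDiff ℝ (⊤:ℕ∞) F) :
    Continuous (fun p : ℝ × Plane => pd F p.1 p.2) :=
  (contDiff_pd hF).continuous

lemma hasFDerivAt_parametric [CompleteSpace G] {F : ℝ × Plane → G}
    (hF : ContDiff ℝ (⊤:ℕ∞) F) (x₀ : Plane) :
    HasFDerivAt (fun x => ∫ t in (0:ℝ)..1, F (t, x))
      (∫ t in (0:ℝ)..1, pd F t x₀) x₀ := by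
  have hK : IsCompact ((uIcc (0:ℝ) 1) ×ˢ closedBall x₀ 1) :=
    isCompact_uIcc.prod (isCompact_closedBall x₀ 1)
  obtain ⟨C, hC⟩ := hK.exists_bound_of_continuousOn (continuous_pd hF).continuousOn
  apply intervalIntegral.hasFDerivAt_integral_of_dominated_of_fderiv_le
    (F' := fun x t => pd F t x) (bound := fun _ => C) (s := ball x₀ 1) (ball_mem_nhds x₀ one_pos)
  · filter_upwards with x
    exact ((hF.continuous.comp
      (continuous_id.prodMk continuous_const))).aestronglyMeasurable.restrict
  · exact (hF.continuous.comp (continuous_id.prodMk continuous_const)).intervalIntegrable 0 1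
  · exact (((continuous_pd hF).comp
      (continuous_id.prodMk continuous_const))).aestronglyMeasurable.restrict
  · filter_upwards with t ht x hx
    exact hC (t, x) ⟨uIoc_subset_uIcc ht, ball_subset_closedBall hx⟩
  · exact intervalIntegrable_const
  · filter_upwards with t _ x _
    exact hasFDerivAt_pd hF t x

lemma contDiff_parametric :
    ∀ (n : ℕ) {G : Type} [NormedAddCommGroup G] [NormedSpace ℝ G] [CompleteSpace G]
      (F : ℝ × Plane → G), ContDiff ℝ (⊤:ℕ∞) F →
      ContDiff ℝ (n : ℕ) (fun x => ∫ t in (0:ℝ)..1, F (t, x))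
  | 0, G, _, _, _, F, hF => by
      rw [show ((0:ℕ) : WithTop ℕ∞) = 0 by norm_cast, contDiff_zero]
      exact intervalIntegral.continuous_parametric_intervalIntegral_of_continuous'
        (by exact hF.continuous.comp (continuous_swap)) 0 1
  | (n+1), G, _, _, _, F, hF => by
      rw [show ((n+1 : ℕ) : WithTop ℕ∞) = (n : ℕ) + 1 by norm_cast, contDiff_succ_iff_fderiv]
      refine ⟨fun x => (hasFDerivAt_parametric hF x).differentiableAt, by simp, ?_⟩
      have heq : fderiv ℝ (fun x => ∫ t in (0:ℝ)..1, F (t, x))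
          = fun x => ∫ t in (0:ℝ)..1, pd F t x :=
        funext fun x => (hasFDerivAt_parametric hF x).fderiv
      rw [heq]
      exact contDiff_parametric n (fun p => pd F p.1 p.2) (contDiff_pd hF)

lemma contDiff_parametric_top {F : ℝ × Plane → ℝ} (hF : ContDiff ℝ (⊤:ℕ∞) F) :
    ContDiff ℝ (⊤:ℕ∞) (fun x => ∫ t in (0:ℝ)..1, F (t, x)) := by
  rw [contDiff_infty]
  exact fun n => contDiff_parametric n F hF

/-! ### Basic facts about `lap` -/

lemma lap_eq {f : Plane → ℝ} (hf : ContDiff ℝ (⊤:ℕ∞) f) (x : Plane) :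
    lap f x = ∑ i : Fin 2, fderiv ℝ (fderiv ℝ f) x (E1 i) (E1 i) := by
  refine Finset.sum_congr rfl fun i _ => ?_
  have hdf : DifferentiableAt ℝ (fderiv ℝ f) x :=
    ((hf.fderiv_right inf_add_one).differentiable one_le_inf) x
  have h2 : HasFDerivAt (fun y => fderiv ℝ f y (EuclideanSpace.single i 1))
      (((fderiv ℝ f x).comp (0 : Plane →L[ℝ] Plane))
        + (fderiv ℝ (fderiv ℝ f) x).flip (EuclideanSpace.single i 1)) x :=
    hdf.hasFDerivAt.clm_apply (hasFDerivAt_const _ _)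
  rw [h2.fderiv]
  simp [E1]

lemma contDiff_lap {f : Plane → ℝ} (hf : ContDiff ℝ (⊤:ℕ∞) f) :
    ContDiff ℝ (⊤:ℕ∞) (lap f) := by
  have hdu : ContDiff ℝ (⊤:ℕ∞) (fderiv ℝ f) := hf.fderiv_right inf_add_one
  refine ContDiff.sum fun i _ => ?_
  have h1 : ContDiff ℝ (⊤:ℕ∞) (fun y => fderiv ℝ f y (EuclideanSpace.single i 1)) :=
    hdu.clm_apply contDiff_const
  exact (h1.fderiv_right inf_add_one).clm_apply contDiff_const

lemma clm_sum_eq (L : Plane →L[ℝ] ℝ) (x : Plane) :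
    ∑ i : Fin 2, x i * L (E1 i) = L x := by
  have hx : x = ∑ i : Fin 2, x i • E1 i := by
    ext j
    simp [E1, Fin.sum_univ_two, EuclideanSpace.single_apply]
    fin_cases j <;> simp
  conv_rhs => rw [hx]
  rw [map_sum]
  simp [smul_eq_mul]

/-! ### The quadratic `N` -/

/-- `N (x,y) = x² + y²`. -/
def N (x : Plane) : ℝ := x 0 ^ 2 + x 1 ^ 2

/-- first derivative of `N` -/
def LN (x : Plane) : Plane →L[ℝ] ℝ :=
  (2 * x 0) • P 0 + (2 * x 1) • P 1

/-- second derivative of `N` -/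
def MN : Plane →L[ℝ] Plane →L[ℝ] ℝ :=
  ((2:ℝ) • P 0).smulRight (P 0)
  + ((2:ℝ) • P 1).smulRight (P 1)

lemma hasFDerivAt_N (x : Plane) : HasFDerivAt N (LN x) x := by
  have h0 : HasFDerivAt (fun y : Plane => y 0) (P 0) x := by
    exact (P 0).hasFDerivAt
  have h1 : HasFDerivAt (fun y : Plane => y 1) (P 1) x := by
    exact (P 1).hasFDerivAt
  have := ((h0.mul h0).add (h1.mul h1))
  have e1 : N = ((fun y : Plane => y 0) * fun y => y 0) + (fun y => y 1) * fun y => y 1 := by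
    funext y; simp [N]; ring
  have e2 : LN x = x 0 • P 0 + x 0 • P 0 + (x 1 • P 1 + x 1 • P 1) := by
    ext v
    simp [LN, P_apply]
    ring
  rw [e1, e2]
  exact this

lemma contDiff_N : ContDiff ℝ (⊤:ℕ∞) N := by
  have h0 : ContDiff ℝ (⊤:ℕ∞) (fun y : Plane => y 0) :=
    (P 0).contDiff
  have h1 : ContDiff ℝ (⊤:ℕ∞) (fun y : Plane => y 1) :=
    (P 1).contDiff
  exact ((h0.pow 2).add (h1.pow 2))

lemma hasFDerivAt_LN (x : Plane) : HasFDerivAt LN MN x := by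
  have h0 : HasFDerivAt (fun y : Plane => y 0) (P 0) x := by
    exact (P 0).hasFDerivAt
  have h1 : HasFDerivAt (fun y : Plane => y 1) (P 1) x := by
    exact (P 1).hasFDerivAt
  have hM : HasFDerivAt (fun y : Plane => MN y) MN x := MN.hasFDerivAt
  have : LN = fun y : Plane => MN y := by
    funext y
    ext v
    simp [LN, MN, P_apply, EuclideanSpace.single_apply]
    try ring
  rw [this]
  exact hM

/-! ### Laplacian of `N * h` -/

lemma lap_N_mul {h : Plane → ℝ} (hh : ContDiff ℝ (⊤:ℕ∞) h) (x : Plane) :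
    lap (fun y => N y * h y) x
      = 4 * h x + 4 * fderiv ℝ h x x + N x * lap h x := by
  have hhd : Differentiable ℝ h := hh.differentiable one_le_inf
  have hhd2 : ContDiff ℝ (⊤:ℕ∞) (fderiv ℝ h) := hh.fderiv_right inf_add_one
  have hNh : ContDiff ℝ (⊤:ℕ∞) (fun y => N y * h y) := contDiff_N.mul hh
  -- first derivative of N * h
  have hD1 : fderiv ℝ (fun y => N y * h y)
      = fun y => N y • fderiv ℝ h y + h y • LN y := by
    funext y
    rw [fderiv_fun_mul ((contDiff_N.differentiable one_le_inf) y) (hhd y)]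
    rw [(hasFDerivAt_N y).fderiv]
  -- second derivative
  have hD2 : HasFDerivAt (fderiv ℝ (fun y => N y * h y))
      (N x • fderiv ℝ (fderiv ℝ h) x + (LN x).smulRight (fderiv ℝ h x)
        + (h x • MN + (fderiv ℝ h x).smulRight (LN x))) x := by
    rw [hD1]
    have hA : HasFDerivAt (fun y => N y • fderiv ℝ h y)
        (N x • fderiv ℝ (fderiv ℝ h) x + (LN x).smulRight (fderiv ℝ h x)) x :=
      (hasFDerivAt_N x).smul ((hhd2.differentiable one_le_inf) x).hasFDerivAt
    have hB : HasFDerivAt (fun y => h y • LN y)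
        (h x • MN + (fderiv ℝ h x).smulRight (LN x)) x :=
      (hhd x).hasFDerivAt.smul (hasFDerivAt_LN x)
    exact hA.add hB
  rw [lap_eq hNh x]
  have hkey : fderiv ℝ (fderiv ℝ (fun y => N y * h y)) x
      = N x • fderiv ℝ (fderiv ℝ h) x + (LN x).smulRight (fderiv ℝ h x)
        + (h x • MN + (fderiv ℝ h x).smulRight (LN x)) := hD2.fderiv
  rw [hkey]
  have hval : ∀ i : Fin 2,
      (N x • fderiv ℝ (fderiv ℝ h) x + (LN x).smulRight (fderiv ℝ h x)
        + (h x • MN + (fderiv ℝ h x).smulRight (LN x))) (E1 i) (E1 i)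
      = N x * (fderiv ℝ (fderiv ℝ h) x (E1 i) (E1 i))
        + LN x (E1 i) * fderiv ℝ h x (E1 i)
        + h x * (MN (E1 i) (E1 i)) + fderiv ℝ h x (E1 i) * LN x (E1 i) := by
    intro i
    simp [smul_eq_mul]
    ring
  rw [Finset.sum_congr rfl fun i _ => hval i]
  rw [lap_eq hh x]
  have hLN : ∀ i : Fin 2, LN x (E1 i) = 2 * x i := by
    intro i
    fin_cases i <;> simp [LN, E1, P_apply, EuclideanSpace.single_apply]
  have hMN : ∀ i : Fin 2, MN (E1 i) (E1 i) = 2 := by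
    intro i
    fin_cases i <;> simp [MN, E1, P_apply, EuclideanSpace.single_apply]
  have hsum : ∑ i : Fin 2, x i * fderiv ℝ h x (E1 i) = fderiv ℝ h x x :=
    clm_sum_eq (fderiv ℝ h x) x
  simp only [Fin.sum_univ_two] at *
  rw [hLN 0, hLN 1, hMN 0, hMN 1] at *
  nlinarith [hsum]

/-! ### Linearity of lap -/

lemma lap_sub {f h : Plane → ℝ} (hf : ContDiff ℝ (⊤:ℕ∞) f) (hh : ContDiff ℝ (⊤:ℕ∞) h)
    (x : Plane) : lap (fun y => f y - h y) x = lap f x - lap h x := by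
  have h1 : fderiv ℝ (fun y => f y - h y) = fun y => fderiv ℝ f y - fderiv ℝ h y :=
    funext fun y => fderiv_fun_sub (hf.differentiable one_le_inf y) (hh.differentiable one_le_inf y)
  rw [lap_eq (hf.sub hh) x, lap_eq hf x, lap_eq hh x]
  have h2 : fderiv ℝ (fderiv ℝ fun y => f y - h y) x
      = fderiv ℝ (fderiv ℝ f) x - fderiv ℝ (fderiv ℝ h) x := by
    rw [h1]
    exact fderiv_fun_sub ((hf.fderiv_right inf_add_one).differentiable one_le_inf x)
      ((hh.fderiv_right inf_add_one).differentiable one_le_inf x)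
  rw [h2, ← Finset.sum_sub_distrib]
  simp

lemma lap_const_mul {f : Plane → ℝ} (hf : ContDiff ℝ (⊤:ℕ∞) f) (c : ℝ) (x : Plane) :
    lap (fun y => c * f y) x = c * lap f x := by
  have hfd : Differentiable ℝ f := hf.differentiable one_le_inf
  have h1 : fderiv ℝ (fun y => c * f y) = fun y => c • fderiv ℝ f y :=
    funext fun y => fderiv_const_mul (hfd y) c
  rw [lap_eq (contDiff_const.mul hf) x, lap_eq hf x]
  have h2 : fderiv ℝ (fderiv ℝ fun y => c * f y) x = c • fderiv ℝ (fderiv ℝ f) x := by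
    rw [h1]
    exact (((hf.fderiv_right inf_add_one).differentiable one_le_inf x).hasFDerivAt.const_smul
      c).fderiv
  rw [h2, Finset.mul_sum]
  simp

/-! ### The dilation-integral `g` -/

/-- `Fw w (t, x) = w (t • x)`. -/
def Fw (w : Plane → ℝ) : ℝ × Plane → ℝ := fun p => w (p.1 • p.2)

variable {w : Plane → ℝ}

lemma contDiff_Fw (hw : ContDiff ℝ (⊤:ℕ∞) w) : ContDiff ℝ (⊤:ℕ∞) (Fw w) :=
  hw.comp (contDiff_fst.smul contDiff_snd)

lemma hasFDerivAt_slice (hw : ContDiff ℝ (⊤:ℕ∞) w) (t : ℝ) (x : Plane) :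
    HasFDerivAt (fun y => w (t • y)) (t • fderiv ℝ w (t • x)) x := by
  have hs : HasFDerivAt (fun y : Plane => t • y) (t • ContinuousLinearMap.id ℝ Plane) x := by
    exact (t • ContinuousLinearMap.id ℝ Plane).hasFDerivAt
  have h := ((hw.differentiable one_le_inf (t • x)).hasFDerivAt).comp x hs
  have e : t • fderiv ℝ w (t • x) = (fderiv ℝ w (t • x)).comp (t • ContinuousLinearMap.id ℝ Plane) := by
    ext v
    simp
  rw [e]
  exact h

lemma pd_Fw (hw : ContDiff ℝ (⊤:ℕ∞) w) (t : ℝ) (x : Plane) :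
    pd (Fw w) t x = t • fderiv ℝ w (t • x) :=
  (hasFDerivAt_pd (contDiff_Fw hw) t x).unique (hasFDerivAt_slice hw t x)

lemma pd_pd_Fw_apply (hw : ContDiff ℝ (⊤:ℕ∞) w) (t : ℝ) (x : Plane) (i : Fin 2) :
    pd (fun p : ℝ × Plane => pd (Fw w) p.1 p.2) t x (E1 i) (E1 i)
      = t ^ 2 * (fderiv ℝ (fderiv ℝ w) (t • x) (E1 i) (E1 i)) := by
  have hdw : ContDiff ℝ (⊤:ℕ∞) (fderiv ℝ w) := hw.fderiv_right inf_add_one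
  have hs : HasFDerivAt (fun y : Plane => t • y) (t • ContinuousLinearMap.id ℝ Plane) x := by
    exact (t • ContinuousLinearMap.id ℝ Plane).hasFDerivAt
  have h1 : HasFDerivAt (fun y => fderiv ℝ w (t • y))
      ((fderiv ℝ (fderiv ℝ w) (t • x)).comp (t • ContinuousLinearMap.id ℝ Plane)) x :=
    ((hdw.differentiable one_le_inf (t • x)).hasFDerivAt).comp x hs
  have h2 : HasFDerivAt (fun y => pd (Fw w) t y)
      (t • ((fderiv ℝ (fderiv ℝ w) (t • x)).comp (t • ContinuousLinearMap.id ℝ Plane))) x := by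
    rw [show (fun y => pd (Fw w) t y) = fun y => t • fderiv ℝ w (t • y) from
      funext fun y => pd_Fw hw t y]
    exact h1.const_smul t
  have h3 := hasFDerivAt_pd (contDiff_pd (contDiff_Fw hw)) t x
  have h4 := h3.unique h2
  rw [h4]
  simp
  ring

lemma lap_g_zero (hw : ContDiff ℝ (⊤:ℕ∞) w) (hharm : ∀ y, lap w y = 0) (x : Plane) :
    lap (fun y => ∫ t in (0:ℝ)..1, Fw w (t, y)) x = 0 := by
  have hg : ContDiff ℝ (⊤:ℕ∞) (fun y => ∫ t in (0:ℝ)..1, Fw w (t, y)) :=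
    contDiff_parametric_top (contDiff_Fw hw)
  rw [lap_eq hg x]
  have hfd : fderiv ℝ (fun y => ∫ t in (0:ℝ)..1, Fw w (t, y))
      = fun y => ∫ t in (0:ℝ)..1, pd (Fw w) t y :=
    funext fun y => (hasFDerivAt_parametric (contDiff_Fw hw) y).fderiv
  have h2 : fderiv ℝ (fderiv ℝ (fun y => ∫ t in (0:ℝ)..1, Fw w (t, y))) x
      = ∫ t in (0:ℝ)..1, pd (fun p : ℝ × Plane => pd (Fw w) p.1 p.2) t x := by
    rw [hfd]
    exact (hasFDerivAt_parametric (contDiff_pd (contDiff_Fw hw)) x).fderiv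
  rw [h2]
  have hct : Continuous fun t : ℝ => pd (fun p : ℝ × Plane => pd (Fw w) p.1 p.2) t x :=
    (continuous_pd (contDiff_pd (contDiff_Fw hw))).comp (continuous_id.prodMk continuous_const)
  have happ : ∀ i : Fin 2,
      (∫ t in (0:ℝ)..1, pd (fun p : ℝ × Plane => pd (Fw w) p.1 p.2) t x) (E1 i) (E1 i)
        = ∫ t in (0:ℝ)..1,
            pd (fun p : ℝ × Plane => pd (Fw w) p.1 p.2) t x (E1 i) (E1 i) := by
    intro i
    rw [ContinuousLinearMap.intervalIntegral_apply (hct.intervalIntegrable 0 1) (E1 i),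
      ContinuousLinearMap.intervalIntegral_apply
        (show IntervalIntegrable
            (fun t : ℝ => pd (fun p : ℝ × Plane => pd (Fw w) p.1 p.2) t x (E1 i))
            MeasureTheory.volume 0 1 from
          ((ContinuousLinearMap.apply ℝ (Plane →L[ℝ] ℝ) (E1 i)).continuous.comp
              hct).intervalIntegrable 0 1) (E1 i)]
  rw [Finset.sum_congr rfl fun i _ => happ i]
  have hint : ∀ i : Fin 2, (∫ t in (0:ℝ)..1,
      pd (fun p : ℝ × Plane => pd (Fw w) p.1 p.2) t x (E1 i) (E1 i))
      = ∫ t in (0:ℝ)..1, t ^ 2 * (fderiv ℝ (fderiv ℝ w) (t • x) (E1 i) (E1 i)) := by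
    intro i
    apply intervalIntegral.integral_congr
    intro t _
    exact pd_pd_Fw_apply hw t x i
  rw [Finset.sum_congr rfl fun i _ => hint i]
  have hDcont : Continuous (fderiv ℝ (fderiv ℝ w)) :=
    ((hw.fderiv_right inf_add_one).fderiv_right inf_add_one).continuous
  rw [← intervalIntegral.integral_finset_sum]
  · have : ∀ t : ℝ, ∑ i : Fin 2,
        t ^ 2 * (fderiv ℝ (fderiv ℝ w) (t • x) (E1 i) (E1 i)) = 0 := by
      intro t
      rw [← Finset.mul_sum, ← lap_eq hw (t • x), hharm (t • x), mul_zero]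
    simp only [this]
    simp
  · intro i _
    apply Continuous.intervalIntegrable
    continuity

/-! ### Euler identity -/

lemma euler (hw : ContDiff ℝ (⊤:ℕ∞) w) (x : Plane) :
    (∫ t in (0:ℝ)..1, Fw w (t, x))
      + fderiv ℝ (fun y => ∫ t in (0:ℝ)..1, Fw w (t, y)) x x = w x := by
  set g : Plane → ℝ := fun y => ∫ t in (0:ℝ)..1, Fw w (t, y) with hg_def
  have hcont : Continuous fun τ : ℝ => w (τ • x) := hw.continuous.comp (by fun_prop)
  have hφ : HasDerivAt (fun s : ℝ => ∫ τ in (0:ℝ)..s, w (τ • x)) (w ((1:ℝ) • x)) 1 :=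
    intervalIntegral.integral_hasDerivAt_right (hcont.intervalIntegrable 0 1)
      (hcont.stronglyMeasurableAtFilter _ _) hcont.continuousAt
  have hsx : HasDerivAt (fun s : ℝ => s • x) x 1 := by
    simpa using (hasDerivAt_id (1:ℝ)).smul_const x
  have hgc : HasDerivAt (fun s : ℝ => g (s • x)) (fderiv ℝ g x x) 1 := by
    have h := hasFDerivAt_parametric (contDiff_Fw hw) ((1:ℝ) • x)
    have h2 := h.comp_hasDerivAt 1 hsx
    rw [one_smul] at h2
    have h3 : fderiv ℝ g x = ∫ t in (0:ℝ)..1, pd (Fw w) t x :=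
      (hasFDerivAt_parametric (contDiff_Fw hw) x).fderiv
    rw [h3]
    exact h2
  have hψ : HasDerivAt (fun s : ℝ => s * g (s • x)) (g x + fderiv ℝ g x x) 1 := by
    have h := (hasDerivAt_id (1:ℝ)).mul hgc
    simp only [one_smul, id_eq, one_mul] at h
    exact h
  have heq : (fun s : ℝ => s * g (s • x)) =ᶠ[nhds 1] fun s => ∫ τ in (0:ℝ)..s, w (τ • x) := by
    filter_upwards [eventually_gt_nhds one_pos] with s hs
    have hs0 : s ≠ 0 := ne_of_gt hs
    have h1 : g (s • x) = ∫ t in (0:ℝ)..1, w ((t * s) • x) := by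
      apply intervalIntegral.integral_congr
      intro t _
      simp [Fw, smul_smul, mul_comm]
    rw [h1, intervalIntegral.integral_comp_mul_right (fun τ => w (τ • x)) hs0]
    simp only [zero_mul, one_mul, smul_eq_mul]
    field_simp
  have hφ' : HasDerivAt (fun s : ℝ => ∫ τ in (0:ℝ)..s, w (τ • x))
      (g x + fderiv ℝ g x x) 1 := hψ.congr_of_eventuallyEq heq.symm
  have := hφ'.unique hφ
  rw [this, one_smul]

end Almansi

/-- Almansi decomposition: every entire biharmonic function `u` on `ℝ²`
can be written as `u(x,y) = h₀(x,y) + (x² + y²) h₁(x,y)` with `h₀, h₁` harmonic. -/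
theorem stmt_3 (u : Plane → ℝ)
    (hsmooth : ContDiff ℝ (⊤ : ℕ∞) u) (hbiharm : ∀ x, lap (lap u) x = 0) :
    ∃ h₀ h₁ : Plane → ℝ,
      ContDiff ℝ (⊤ : ℕ∞) h₀ ∧ (∀ x, lap h₀ x = 0) ∧
      ContDiff ℝ (⊤ : ℕ∞) h₁ ∧ (∀ x, lap h₁ x = 0) ∧
      ∀ x : Plane, u x = h₀ x + (x 0 ^ 2 + x 1 ^ 2) * h₁ x := by
  classical
  have hw : ContDiff ℝ (⊤:ℕ∞) (lap u) := Almansi.contDiff_lap hsmooth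
  set g : Plane → ℝ := fun y => ∫ t in (0:ℝ)..1, Almansi.Fw (lap u) (t, y) with hg_def
  have hg : ContDiff ℝ (⊤:ℕ∞) g := Almansi.contDiff_parametric_top (Almansi.contDiff_Fw hw)
  have hg_harm : ∀ x, lap g x = 0 := fun x => Almansi.lap_g_zero hw hbiharm x
  have hEuler : ∀ x, g x + fderiv ℝ g x x = lap u x := fun x => Almansi.euler hw x
  have hh₁ : ContDiff ℝ (⊤:ℕ∞) (fun y => (1/4:ℝ) * g y) := contDiff_const.mul hg
  have hh₁harm : ∀ x, lap (fun y => (1/4:ℝ) * g y) x = 0 := by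
    intro x
    rw [Almansi.lap_const_mul hg (1/4) x, hg_harm x, mul_zero]
  refine ⟨fun y => u y - Almansi.N y * ((1/4:ℝ) * g y), fun y => (1/4:ℝ) * g y,
    hsmooth.sub (Almansi.contDiff_N.mul hh₁), ?_, hh₁, hh₁harm, ?_⟩
  · intro x
    rw [Almansi.lap_sub hsmooth (Almansi.contDiff_N.mul hh₁) x,
      Almansi.lap_N_mul hh₁ x]
    have h4 : fderiv ℝ (fun y => (1/4:ℝ) * g y) x = (1/4:ℝ) • fderiv ℝ g x :=
      fderiv_const_mul (hg.differentiable Almansi.one_le_inf x) _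
    rw [h4, hh₁harm x]
    have h5 := hEuler x
    simp only [ContinuousLinearMap.smul_apply, smul_eq_mul, mul_zero]
    nlinarith [h5]
  · intro x
    show u x = u x - Almansi.N x * ((1/4:ℝ) * g x) + (x 0 ^ 2 + x 1 ^ 2) * ((1/4:ℝ) * g x)
    simp only [Almansi.N]
    ring
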